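/- The map π : [m]×[n] → Pint_{m,n} sending (i,j) to the cortege ([i−k+1..i] | [j−k+1..j]) with k = min(i,j) is a bijection between [m]×[n] and the set Pint_{m,n} of nonempty pressed double-interval corteges. -/
import Mathlib


/-- The map `π` sending `(i,j)` to the cortege
`([i−k+1..i] | [j−k+1..j])` with `k = min(i,j)`. -/
def piMap (p : ℕ × ℕ) : Finset ℕ × Finset ℕ :=
  (Finset.Icc (p.1 - min p.1 p.2 + 1) p.1, Finset.Icc (p.2 - min p.1 p.2 + 1) p.2)

/-- The set of nonempty pressed double-interval corteges of `E^{m,n}`: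
pairs `(I,J)` of nonempty integer intervals `I ⊆ [1..m]`, `J ⊆ [1..n]` of
equal cardinality such that `I` or `J` is an initial interval. -/
def Pint (m n : ℕ) : Set (Finset ℕ × Finset ℕ) :=
  {IJ | (∃ a b, 1 ≤ a ∧ a ≤ b ∧ b ≤ m ∧ IJ.1 = Finset.Icc a b) ∧
        (∃ c d, 1 ≤ c ∧ c ≤ d ∧ d ≤ n ∧ IJ.2 = Finset.Icc c d) ∧
        IJ.1.card = IJ.2.card ∧
        (IJ.1 = Finset.Icc 1 IJ.1.card ∨ IJ.2 = Finset.Icc 1 IJ.2.card)}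

lemma icc_inj {a b c d : ℕ} (hab : a ≤ b) (hcd : c ≤ d)
    (h : Finset.Icc a b = Finset.Icc c d) : a = c ∧ b = d := by
  have h1 : a ∈ Finset.Icc c d := h ▸ Finset.mem_Icc.2 ⟨le_rfl, hab⟩
  have h2 : b ∈ Finset.Icc c d := h ▸ Finset.mem_Icc.2 ⟨hab, le_rfl⟩
  have h3 : c ∈ Finset.Icc a b := h.symm ▸ Finset.mem_Icc.2 ⟨le_rfl, hcd⟩
  have h4 : d ∈ Finset.Icc a b := h.symm ▸ Finset.mem_Icc.2 ⟨hcd, le_rfl⟩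
  simp [Finset.mem_Icc] at h1 h2 h3 h4
  omega

lemma mem_prod_Icc {m n i j : ℕ}
    (hp : (i, j) ∈ (↑(Finset.Icc 1 m ×ˢ Finset.Icc 1 n) : Set (ℕ × ℕ))) :
    1 ≤ i ∧ i ≤ m ∧ 1 ≤ j ∧ j ≤ n := by
  rw [Finset.mem_coe, Finset.mem_product, Finset.mem_Icc, Finset.mem_Icc] at hp
  exact ⟨hp.1.1, hp.1.2, hp.2.1, hp.2.2⟩

/-- `π` is a bijection between `[m]×[n]` and `Pint_{m,n}`. -/
theorem stmt15 (m n : ℕ) :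
    Set.BijOn piMap (↑(Finset.Icc 1 m ×ˢ Finset.Icc 1 n)) (Pint m n) := by
  constructor
  · -- MapsTo
    rintro ⟨i, j⟩ hp
    obtain ⟨hi1, him, hj1, hjn⟩ := mem_prod_Icc hp
    set k := min i j with hk
    have hki : k ≤ i := min_le_left _ _
    have hkj : k ≤ j := min_le_right _ _
    have hk1 : 1 ≤ k := by omega
    refine ⟨⟨i - k + 1, i, by omega, by omega, him, rfl⟩,
      ⟨j - k + 1, j, by omega, by omega, hjn, rfl⟩, ?_, ?_⟩
    · simp only [piMap, Nat.card_Icc]; omega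
    · simp only [piMap, Nat.card_Icc]
      rcases le_total i j with h | h
      · left
        rw [show i - k + 1 = 1 by omega]
        congr 1 <;> omega
      · right
        rw [show j - k + 1 = 1 by omega]
        congr 1 <;> omega
  constructor
  · -- InjOn
    rintro ⟨i, j⟩ hp ⟨i', j'⟩ hq h
    obtain ⟨hi1, _, hj1, _⟩ := mem_prod_Icc hp
    obtain ⟨hi1', _, hj1', _⟩ := mem_prod_Icc hq
    simp only [piMap, Prod.mk.injEq] at h
    obtain ⟨h1, h2⟩ := h
    have e1 := icc_inj (by omega : i - min i j + 1 ≤ i) (by omega) h1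
    have e2 := icc_inj (by omega : j - min i j + 1 ≤ j) (by omega) h2
    simp only [Prod.mk.injEq]
    omega
  · -- SurjOn
    rintro ⟨I, J⟩ ⟨⟨a, b, ha1, hab, hbm, hI⟩, ⟨c, d, hc1, hcd, hdn, hJ⟩, hcard, hpress⟩
    simp only at hI hJ hcard hpress
    subst hI; subst hJ
    rw [Nat.card_Icc, Nat.card_Icc] at hcard hpress
    refine ⟨(b, d), ?_, ?_⟩
    · rw [Finset.mem_coe, Finset.mem_product, Finset.mem_Icc, Finset.mem_Icc]
      exact ⟨⟨by omega, hbm⟩, by omega, hdn⟩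
    · have key : a = 1 ∨ c = 1 := by
        rcases hpress with h | h
        · exact Or.inl (icc_inj hab (by omega) h).1
        · exact Or.inr (icc_inj hcd (by omega) h).1
      simp only [piMap, Prod.mk.injEq]
      constructor <;> (congr 1 <;> omega)
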